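/- Let Γ be the numerical semigroup strictly generated by r₀, …, r_h with divisor sequence θ_j = gcd(r₀,…,r_{j-1}), θ₁ > ⋯ > θ_{h+1} = 1. Then the number of elements of Γ below the conductor c = −r₀ + 1 + Σ_{j=1}^h r_j(θ_j/θ_{j+1} − 1) equals c/2. -/

import Mathlib

private lemma sg_mod_cong (θ' θ rr : ℕ) (hθ' : 0 < θ') (hd : Nat.gcd θ rr = θ')
    (t : ℤ) (hdvd : (θ : ℤ) ∣ t * rr) : ((θ / θ' : ℕ) : ℤ) ∣ t := by
  have hθθ' : θ' ∣ θ := hd ▸ Nat.gcd_dvd_left θ rr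
  have hrr : θ' ∣ rr := hd ▸ Nat.gcd_dvd_right θ rr
  have hgpos : 0 < Nat.gcd θ rr := hd ▸ hθ'
  have hcop : Nat.Coprime (θ / θ') (rr / θ') := by
    have := Nat.coprime_div_gcd_div_gcd (m := θ) (n := rr) hgpos
    rwa [hd] at this
  obtain ⟨k, hk⟩ := hdvd
  have h1 : ((θ' : ℕ) : ℤ) ≠ 0 := by exact_mod_cast hθ'.ne'
  have e1 : ((rr / θ' : ℕ) : ℤ) * θ' = rr := by exact_mod_cast Nat.div_mul_cancel hrr
  have e2 : ((θ / θ' : ℕ) : ℤ) * θ' = θ := by exact_mod_cast Nat.div_mul_cancel hθθ'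
  have key : t * ((rr / θ' : ℕ) : ℤ) = ((θ / θ' : ℕ) : ℤ) * k := by
    apply mul_right_cancel₀ h1
    calc t * ((rr / θ' : ℕ) : ℤ) * θ' = t * (((rr / θ' : ℕ) : ℤ) * θ') := by ring
    _ = t * rr := by rw [e1]
    _ = θ * k := hk
    _ = ((θ / θ' : ℕ) : ℤ) * k * θ' := by rw [← e2]; ring
  have hco : IsCoprime ((θ / θ' : ℕ) : ℤ) ((rr / θ' : ℕ) : ℤ) :=
    Nat.isCoprime_iff_coprime.2 hcop
  exact hco.dvd_of_dvd_mul_right ⟨k, key⟩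

private lemma sg_mod_exists (θ' θ rr : ℕ) (hθ : 0 < θ) (hθ' : 0 < θ')
    (hd : Nat.gcd θ rr = θ') (z : ℤ) (hz : (θ' : ℤ) ∣ z) :
    ∃ a : ℕ, a < θ / θ' ∧ (θ : ℤ) ∣ z - (a : ℤ) * rr := by
  have hθθ' : θ' ∣ θ := hd ▸ Nat.gcd_dvd_left θ rr
  have hrr : θ' ∣ rr := hd ▸ Nat.gcd_dvd_right θ rr
  have hepos : 0 < θ / θ' := Nat.div_pos (Nat.le_of_dvd hθ hθθ') hθ'
  obtain ⟨q, hq⟩ := hz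
  have hbez : (θ' : ℤ) = θ * Int.gcdA θ rr + rr * Int.gcdB θ rr := by
    have := Int.gcd_eq_gcd_ab (θ : ℤ) (rr : ℤ)
    rwa [Int.gcd_natCast_natCast, hd] at this
  set w : ℤ := q * Int.gcdB θ rr with hw
  have h1 : (θ : ℤ) ∣ z - w * rr := ⟨q * Int.gcdA θ rr, by rw [hq, hbez]; ring⟩
  set e : ℤ := ((θ / θ' : ℕ) : ℤ) with he
  have hepos' : 0 < e := by rw [he]; exact_mod_cast hepos
  have h0 : 0 ≤ w % e := Int.emod_nonneg w hepos'.ne'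
  have hlt : w % e < e := Int.emod_lt_of_pos w hepos'
  refine ⟨(w % e).toNat, by omega, ?_⟩
  have hcast : ((w % e).toNat : ℤ) = w % e := Int.toNat_of_nonneg h0
  obtain ⟨s, hs⟩ := hrr
  have hs' : (rr : ℤ) = θ' * s := by exact_mod_cast hs
  have h2 : (θ : ℤ) = e * θ' := by
    rw [he]; exact_mod_cast (Nat.div_mul_cancel hθθ').symm
  obtain ⟨u, hu⟩ := h1
  refine ⟨u + (w / e) * s, ?_⟩
  have hdef : w % e = w - e * (w / e) := Int.emod_def w e
  rw [hcast, hdef]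
  have : z - (w - e * (w / e)) * rr = (z - w * rr) + (e * (w / e)) * rr := by ring
  rw [this, hu, hs', h2]; ring

private lemma sg_mod_unique (θ' θ rr : ℕ) (hθ' : 0 < θ') (hd : Nat.gcd θ rr = θ')
    (a b : ℕ) (ha : a < θ / θ') (hb : b < θ / θ')
    (hab : (θ : ℤ) ∣ ((a : ℤ) - b) * rr) : a = b := by
  have := sg_mod_cong θ' θ rr hθ' hd _ hab
  have h0 : ((a:ℤ) - b) = 0 := Int.eq_zero_of_abs_lt_dvd this (by
    rw [abs_sub_lt_iff]; constructor <;> [skip; skip] <;> push_cast <;> omega)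
  omega

private def SGDigits (r θ : ℕ → ℕ) (n : ℕ) (z : ℤ) (a : ℕ → ℕ) : Prop :=
  (∀ j, 1 ≤ j → j ≤ n → a j < θ j / θ (j + 1)) ∧
  (∀ j, 1 ≤ j → j ≤ n + 1 → (θ j : ℤ) ∣ z - ∑ i ∈ Finset.Icc j n, (a i : ℤ) * r i)

section chain
variable (h : ℕ) (r θ : ℕ → ℕ)

private lemma sg_theta_dvd_r
    (hθ : ∀ j, 1 ≤ j → j ≤ h + 1 → θ j = (Finset.range j).gcd r) :
    ∀ j i, 1 ≤ j → j ≤ h + 1 → i < j → θ j ∣ r i := fun j i h1 h2 hi => by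
  rw [hθ j h1 h2]; exact Finset.gcd_dvd (Finset.mem_range.2 hi)

private lemma sg_theta_pos (hpos0 : 0 < r 0)
    (hθ : ∀ j, 1 ≤ j → j ≤ h + 1 → θ j = (Finset.range j).gcd r) :
    ∀ j, 1 ≤ j → j ≤ h + 1 → 0 < θ j := fun j h1 h2 =>
  Nat.pos_of_dvd_of_pos (sg_theta_dvd_r h r θ hθ j 0 h1 h2 (by omega)) hpos0

private lemma sg_theta_succ_dvd
    (hθ : ∀ j, 1 ≤ j → j ≤ h + 1 → θ j = (Finset.range j).gcd r) :
    ∀ j, 1 ≤ j → j ≤ h → θ (j + 1) ∣ θ j := fun j h1 h2 => by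
  rw [hθ j h1 (by omega), hθ (j + 1) (by omega) (by omega)]
  exact Finset.dvd_gcd fun i hi =>
    Finset.gcd_dvd (Finset.mem_range.2 (by have := Finset.mem_range.1 hi; omega))

private lemma sg_gcd_theta
    (hθ : ∀ j, 1 ≤ j → j ≤ h + 1 → θ j = (Finset.range j).gcd r) :
    ∀ j, 1 ≤ j → j ≤ h → Nat.gcd (θ j) (r j) = θ (j + 1) := fun j h1 h2 => by
  rw [hθ j h1 (by omega), hθ (j + 1) (by omega) (by omega), Finset.range_add_one,
    Finset.gcd_insert, Nat.gcd_comm]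
  rfl

private lemma sg_e_two (hpos0 : 0 < r 0)
    (hθ : ∀ j, 1 ≤ j → j ≤ h + 1 → θ j = (Finset.range j).gcd r)
    (hdec : ∀ j, 1 ≤ j → j ≤ h → θ (j + 1) < θ j) :
    ∀ j, 1 ≤ j → j ≤ h → 2 ≤ θ j / θ (j + 1) := fun j h1 h2 => by
  have hdvd := sg_theta_succ_dvd h r θ hθ j h1 h2
  have hp := sg_theta_pos h r θ hpos0 hθ (j + 1) (by omega) (by omega)
  have hlt := hdec j h1 h2
  obtain ⟨k, hk⟩ := hdvd
  have hk2 : 2 ≤ k := by nlinarith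
  rw [hk, Nat.mul_div_cancel_left _ hp]
  exact hk2

end chain

private lemma sg_Icc_insert (j n : ℕ) (hj : j ≤ n + 1) :
    Finset.Icc j (n + 1) = insert (n + 1) (Finset.Icc j n) := by
  ext i
  simp only [Finset.mem_Icc, Finset.mem_insert]
  omega

private lemma sg_digits_peel (r θ : ℕ → ℕ) (n : ℕ) (z : ℤ) (a : ℕ → ℕ)
    (hd : SGDigits r θ (n + 1) z a) :
    SGDigits r θ n (z - (a (n + 1) : ℤ) * r (n + 1)) a := by
  refine ⟨fun j h1 h2 => hd.1 j h1 (by omega), fun j h1 h2 => ?_⟩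
  have := hd.2 j h1 (by omega)
  rw [sg_Icc_insert j n (by omega), Finset.sum_insert (by simp)] at this
  have heq : z - ((a (n + 1) : ℤ) * r (n + 1) + ∑ i ∈ Finset.Icc j n, (a i : ℤ) * r i) =
      z - (a (n + 1) : ℤ) * r (n + 1) - ∑ i ∈ Finset.Icc j n, (a i : ℤ) * r i := by ring
  rwa [heq] at this

private lemma sg_digits_exist (h : ℕ) (r θ : ℕ → ℕ) (hpos0 : 0 < r 0)
    (hθ : ∀ j, 1 ≤ j → j ≤ h + 1 → θ j = (Finset.range j).gcd r) :
    ∀ n, n ≤ h → ∀ z : ℤ, ((θ (n + 1) : ℕ) : ℤ) ∣ z → ∃ a, SGDigits r θ n z a := by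
  intro n
  induction n with
  | zero =>
    intro _ z hz
    refine ⟨fun _ => 0, fun j h1 h2 => by omega, fun j h1 h2 => ?_⟩
    have : j = 1 := by omega
    subst this
    simpa using hz
  | succ n ih =>
    intro hn z hz
    have hp1 : 0 < θ (n + 1) := sg_theta_pos h r θ hpos0 hθ (n + 1) (by omega) (by omega)
    have hp2 : 0 < θ (n + 2) := sg_theta_pos h r θ hpos0 hθ (n + 2) (by omega) (by omega)
    obtain ⟨t, ht1, ht2⟩ := sg_mod_exists (θ (n + 2)) (θ (n + 1)) (r (n + 1)) hp1 hp2
      (sg_gcd_theta h r θ hθ (n + 1) (by omega) (by omega)) z hz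
    obtain ⟨a, ha⟩ := ih (by omega) (z - (t : ℤ) * r (n + 1)) ht2
    classical
    refine ⟨fun j => if j = n + 1 then t else a j, fun j h1 h2 => ?_, fun j h1 h2 => ?_⟩
    · by_cases hj : j = n + 1
      · subst hj; simpa using ht1
      · simp only [if_neg hj]; exact ha.1 j h1 (by omega)
    · by_cases hj : j = n + 2
      · subst hj
        have : Finset.Icc (n + 2) (n + 1) = ∅ := by
          apply Finset.Icc_eq_empty; omega
        rw [this]
        simpa using hz
      · have hj2 : j ≤ n + 1 := by omega
        rw [sg_Icc_insert j n hj2, Finset.sum_insert (by simp)]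
        beta_reduce
        rw [if_pos rfl]
        have hcongr : ∑ i ∈ Finset.Icc j n, (((if i = n + 1 then t else a i : ℕ)) : ℤ) * r i =
            ∑ i ∈ Finset.Icc j n, (a i : ℤ) * r i := by
          apply Finset.sum_congr rfl
          intro i hi
          have : i ≠ n + 1 := by have := (Finset.mem_Icc.1 hi).2; omega
          simp [this]
        have hsplit : z - ((t : ℤ) * r (n + 1) + ∑ i ∈ Finset.Icc j n, (a i : ℤ) * r i) =
            (z - (t : ℤ) * r (n + 1)) - ∑ i ∈ Finset.Icc j n, (a i : ℤ) * r i := by ring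
        rw [hcongr, hsplit]
        exact ha.2 j h1 hj2

private lemma sg_digits_unique (h : ℕ) (r θ : ℕ → ℕ) (hpos0 : 0 < r 0)
    (hθ : ∀ j, 1 ≤ j → j ≤ h + 1 → θ j = (Finset.range j).gcd r) :
    ∀ n, n ≤ h → ∀ z a b, SGDigits r θ n z a → SGDigits r θ n z b →
      ∀ j, 1 ≤ j → j ≤ n → a j = b j := by
  intro n
  induction n with
  | zero => intro _ z a b _ _ j h1 h2; omega
  | succ n ih =>
    intro hn z a b da db j h1 h2
    have hp2 : 0 < θ (n + 2) := sg_theta_pos h r θ hpos0 hθ (n + 2) (by omega) (by omega)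
    have htop : a (n + 1) = b (n + 1) := by
      have d1 := da.2 (n + 1) (by omega) (by omega)
      have d2 := db.2 (n + 1) (by omega) (by omega)
      rw [Finset.Icc_self, Finset.sum_singleton] at d1 d2
      refine sg_mod_unique (θ (n + 2)) (θ (n + 1)) (r (n + 1)) hp2
        (sg_gcd_theta h r θ hθ (n + 1) (by omega) (by omega)) _ _
        (da.1 (n + 1) (by omega) (by omega)) (db.1 (n + 1) (by omega) (by omega)) ?_
      have heq : ((a (n + 1) : ℤ) - b (n + 1)) * r (n + 1) =
          (z - (b (n + 1) : ℤ) * r (n + 1)) - (z - (a (n + 1) : ℤ) * r (n + 1)) := by ring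
      rw [heq]
      exact dvd_sub d2 d1
    by_cases hj : j = n + 1
    · subst hj; exact htop
    · have pa := sg_digits_peel r θ n z a da
      have pb := sg_digits_peel r θ n z b db
      rw [← htop] at pb
      exact ih (by omega) _ a b pa pb j h1 (by omega)

private lemma sg_sum_bound (h : ℕ) (r θ : ℕ → ℕ) (hpos : ∀ j, j ≤ h → 0 < r j)
    (hpos0 : 0 < r 0)
    (hθ : ∀ j, 1 ≤ j → j ≤ h + 1 → θ j = (Finset.range j).gcd r)
    (hdec : ∀ j, 1 ≤ j → j ≤ h → θ (j + 1) < θ j)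
    (hstrict : ∀ j, 1 ≤ j → j + 1 ≤ h → (θ j / θ (j + 1)) * r j < r (j + 1)) :
    ∀ n, n + 1 ≤ h → ∑ j ∈ Finset.Icc 1 n, (θ j / θ (j + 1) - 1) * r j < r (n + 1) := by
  intro n
  induction n with
  | zero => intro hn; simpa using hpos 1 hn
  | succ n ih =>
    intro hn
    have h1 := ih (by omega)
    have he2 := sg_e_two h r θ hpos0 hθ hdec (n + 1) (by omega) (by omega)
    have hs := hstrict (n + 1) (by omega) (by omega)
    simp only [show n + 1 + 1 = n + 2 from rfl] at he2 hs
    rw [Finset.sum_Icc_succ_top (by omega : 1 ≤ n + 1)]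
    have hrpos : 0 < r (n + 1) := hpos (n + 1) (by omega)
    have key : (θ (n + 1) / θ (n + 2) - 1) * r (n + 1) + r (n + 1) =
        (θ (n + 1) / θ (n + 2)) * r (n + 1) := by
      have h2' : 1 ≤ θ (n + 1) / θ (n + 2) := by omega
      rcases Nat.exists_eq_add_of_le h2' with ⟨k, hk⟩
      rw [hk, Nat.add_sub_cancel_left]
      ring
    simp only [show n + 1 + 1 = n + 2 from rfl]
    omega

private lemma sg_digits_compl (h : ℕ) (r θ : ℕ → ℕ) (hpos0 : 0 < r 0)
    (hθ : ∀ j, 1 ≤ j → j ≤ h + 1 → θ j = (Finset.range j).gcd r)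
    (hdec : ∀ j, 1 ≤ j → j ≤ h → θ (j + 1) < θ j)
    (n : ℕ) (hn : n ≤ h) (z : ℤ) (a : ℕ → ℕ) (hd : SGDigits r θ n z a) :
    SGDigits r θ n (((∑ j ∈ Finset.Icc 1 n, (θ j / θ (j + 1) - 1) * r j : ℕ) : ℤ) - z)
      (fun j => θ j / θ (j + 1) - 1 - a j) := by
  constructor
  · intro j h1 h2
    have := sg_e_two h r θ hpos0 hθ hdec j h1 (by omega)
    beta_reduce
    omega
  · intro j h1 h2
    have hsub : Finset.Icc j n ⊆ Finset.Icc 1 n := by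
      intro i hi
      simp only [Finset.mem_Icc] at *
      omega
    have hcast1 : ((∑ i ∈ Finset.Icc 1 n, (θ i / θ (i + 1) - 1) * r i : ℕ) : ℤ) =
        ∑ i ∈ Finset.Icc 1 n, ((θ i / θ (i + 1) - 1 : ℕ) : ℤ) * r i := by
      push_cast
      rfl
    have hcast2 : ∑ i ∈ Finset.Icc j n,
        (((fun j => θ j / θ (j + 1) - 1 - a j) i : ℕ) : ℤ) * r i =
        ∑ i ∈ Finset.Icc j n, (((θ i / θ (i + 1) - 1 : ℕ) : ℤ) - a i) * r i := by
      apply Finset.sum_congr rfl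
      intro i hi
      have hi' := Finset.mem_Icc.1 hi
      have hb := hd.1 i (by omega) (by omega)
      congr 1
      push_cast [Nat.cast_sub (by omega : a i ≤ θ i / θ (i + 1) - 1)]
      ring
    rw [hcast1, hcast2]
    have halg : ∑ i ∈ Finset.Icc 1 n, ((θ i / θ (i + 1) - 1 : ℕ) : ℤ) * r i - z -
        ∑ i ∈ Finset.Icc j n, (((θ i / θ (i + 1) - 1 : ℕ) : ℤ) - a i) * r i =
        (∑ i ∈ Finset.Icc 1 n, ((θ i / θ (i + 1) - 1 : ℕ) : ℤ) * r i -
          ∑ i ∈ Finset.Icc j n, ((θ i / θ (i + 1) - 1 : ℕ) : ℤ) * r i) -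
        (z - ∑ i ∈ Finset.Icc j n, (a i : ℤ) * r i) := by
      simp only [sub_mul]
      rw [Finset.sum_sub_distrib]
      ring
    rw [halg]
    apply dvd_sub
    · rw [← Finset.sum_sdiff_eq_sub hsub]
      apply Finset.dvd_sum
      intro i hi
      have hi' : i < j := by
        simp only [Finset.mem_sdiff, Finset.mem_Icc] at hi
        omega
      exact Dvd.dvd.mul_left
        (Int.natCast_dvd_natCast.2 (sg_theta_dvd_r h r θ hθ j i h1 (by omega) hi')) _
    · exact hd.2 j h1 h2

private lemma sg_digits_shift (h : ℕ) (r θ : ℕ → ℕ)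
    (hθ : ∀ j, 1 ≤ j → j ≤ h + 1 → θ j = (Finset.range j).gcd r)
    (n : ℕ) (hn : n ≤ h) (z : ℤ) (a : ℕ → ℕ) (k : ℤ) (hd : SGDigits r θ n z a) :
    SGDigits r θ n (z + k * r 0) a := by
  refine ⟨hd.1, fun j h1 h2 => ?_⟩
  have halg : z + k * r 0 - ∑ i ∈ Finset.Icc j n, (a i : ℤ) * r i =
      (z - ∑ i ∈ Finset.Icc j n, (a i : ℤ) * r i) + k * r 0 := by ring
  rw [halg]
  exact dvd_add (hd.2 j h1 h2)
    (Dvd.dvd.mul_left (Int.natCast_dvd_natCast.2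
      (sg_theta_dvd_r h r θ hθ j 0 h1 (by omega) (by omega))) k)

private lemma sg_digits_min (h : ℕ) (r θ : ℕ → ℕ) (hpos : ∀ j, j ≤ h → 0 < r j)
    (hθ : ∀ j, 1 ≤ j → j ≤ h + 1 → θ j = (Finset.range j).gcd r)
    (hdec : ∀ j, 1 ≤ j → j ≤ h → θ (j + 1) < θ j)
    (hstrict : ∀ j, 1 ≤ j → j + 1 ≤ h → (θ j / θ (j + 1)) * r j < r (j + 1)) :
    ∀ n, n ≤ h → ∀ (b a : ℕ → ℕ) (z : ℕ),
      z = ∑ j ∈ Finset.range (n + 1), b j * r j → SGDigits r θ n (z : ℤ) a →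
      ∑ j ∈ Finset.Icc 1 n, a j * r j ≤ z := by
  have hpos0 : 0 < r 0 := hpos 0 (by omega)
  intro n
  induction n with
  | zero => intro _ b a z _ _; simp
  | succ n ih =>
    intro hn b a z hz hd
    have hp1 : 0 < θ (n + 1) := sg_theta_pos h r θ hpos0 hθ (n + 1) (by omega) (by omega)
    have hp2 : 0 < θ (n + 2) := sg_theta_pos h r θ hpos0 hθ (n + 2) (by omega) (by omega)
    have he2 := sg_e_two h r θ hpos0 hθ hdec (n + 1) (by omega) (by omega)
    set z1 : ℕ := ∑ j ∈ Finset.range (n + 1), b j * r j with hz1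
    have hzsplit : z = z1 + b (n + 1) * r (n + 1) := by
      rw [hz, Finset.sum_range_succ]
    -- congruence for the top digit
    have hcong1 : (θ (n + 1) : ℤ) ∣ (z : ℤ) - (b (n + 1) : ℤ) * r (n + 1) := by
      have : (z : ℤ) - (b (n + 1) : ℤ) * r (n + 1) = (z1 : ℤ) := by
        rw [hzsplit]; push_cast; ring
      rw [this]
      have : (θ (n + 1) : ℤ) ∣ (z1 : ℤ) := by
        rw [hz1]
        push_cast
        apply Finset.dvd_sum
        intro i hi
        exact Dvd.dvd.mul_left (Int.natCast_dvd_natCast.2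
          (sg_theta_dvd_r h r θ hθ (n + 1) i (by omega) (by omega)
            (Finset.mem_range.1 hi))) _
      exact this
    have hcong2 := hd.2 (n + 1) (by omega) (by omega)
    rw [Finset.Icc_self, Finset.sum_singleton] at hcong2
    have hdiff : (θ (n + 1) : ℤ) ∣ ((b (n + 1) : ℤ) - a (n + 1)) * r (n + 1) := by
      have heq : ((b (n + 1) : ℤ) - a (n + 1)) * r (n + 1) =
          ((z : ℤ) - (a (n + 1) : ℤ) * r (n + 1)) -
          ((z : ℤ) - (b (n + 1) : ℤ) * r (n + 1)) := by ring
      rw [heq]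
      exact dvd_sub hcong2 hcong1
    have hedvd := sg_mod_cong (θ (n + 2)) (θ (n + 1)) (r (n + 1)) hp2
      (sg_gcd_theta h r θ hθ (n + 1) (by omega) (by omega)) _ hdiff
    have hbound := hd.1 (n + 1) (by omega) (by omega)
    simp only [show n + 1 + 1 = n + 2 from rfl] at hbound
    obtain ⟨k, hk⟩ := hedvd
    set e : ℕ := θ (n + 1) / θ (n + 2) with he
    -- either b (n+1) = a (n+1), or b (n+1) ≥ a (n+1) + e
    have hcases : b (n + 1) = a (n + 1) ∨ a (n + 1) + e ≤ b (n + 1) := by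
      rcases lt_trichotomy k 0 with hk0 | hk0 | hk0
      · exfalso
        have h1 : ((b (n + 1) : ℤ)) - a (n + 1) ≤ -(e : ℤ) := by
          calc ((b (n + 1) : ℤ)) - a (n + 1) = (e : ℤ) * k := hk
          _ ≤ (e : ℤ) * (-1) := mul_le_mul_of_nonneg_left (by omega) (by positivity)
          _ = -(e : ℤ) := by ring
        have h2 : (0 : ℤ) ≤ (b (n + 1) : ℤ) := by positivity
        have h3 : ((a (n + 1) : ℤ)) < (e : ℤ) := by exact_mod_cast hbound
        linarith
      · left
        subst hk0
        rw [mul_zero] at hk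
        omega
      · right
        have h1 : (e : ℤ) ≤ (b (n + 1) : ℤ) - a (n + 1) := by
          calc (e : ℤ) = (e : ℤ) * 1 := by ring
          _ ≤ (e : ℤ) * k := mul_le_mul_of_nonneg_left (by omega) (by positivity)
          _ = _ := hk.symm
        omega
    have hsum_split : ∑ j ∈ Finset.Icc 1 (n + 1), a j * r j =
        (∑ j ∈ Finset.Icc 1 n, a j * r j) + a (n + 1) * r (n + 1) :=
      Finset.sum_Icc_succ_top (by omega) _
    rcases hcases with hcase | hcase
    · -- equal digits: peel and use induction hypothesis
      have hle : a (n + 1) * r (n + 1) ≤ z := by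
        rw [hzsplit, ← hcase]; omega
      have hpeel := sg_digits_peel r θ n (z : ℤ) a hd
      have hz1eq : ((z1 : ℕ) : ℤ) = (z : ℤ) - (a (n + 1) : ℤ) * r (n + 1) := by
        rw [hzsplit, ← hcase]; push_cast; ring
      rw [← hz1eq] at hpeel
      have hih := ih (by omega) b a z1 rfl hpeel
      omega
    · -- b (n+1) larger: use the strict growth bound
      have hbnd : ∑ j ∈ Finset.Icc 1 n, a j * r j ≤
          ∑ j ∈ Finset.Icc 1 n, (θ j / θ (j + 1) - 1) * r j := by
        apply Finset.sum_le_sum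
        intro i hi
        have hi' := Finset.mem_Icc.1 hi
        have := hd.1 i (by omega) (by omega)
        exact Nat.mul_le_mul_right _ (by omega)
      have hgrow := sg_sum_bound h r θ hpos hpos0 hθ hdec hstrict n (by omega)
      have hmul : (1 + a (n + 1)) * r (n + 1) ≤ b (n + 1) * r (n + 1) :=
        Nat.mul_le_mul_right _ (by omega)
      have hterm : b (n + 1) * r (n + 1) ≤ z := by rw [hzsplit]; omega
      have : (1 + a (n + 1)) * r (n + 1) = r (n + 1) + a (n + 1) * r (n + 1) := by ring
      omega

private lemma sg_range_split (n : ℕ) (f : ℕ → ℕ) :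
    ∑ j ∈ Finset.range (n + 1), f j = f 0 + ∑ j ∈ Finset.Icc 1 n, f j := by
  rw [Finset.range_eq_Ico, Finset.sum_eq_sum_Ico_succ_bot (by omega)]
  congr 1

/-- Let `Γ` be the numerical semigroup strictly generated by `r₀, …, r_h` with
divisor sequence `θ j = gcd(r₀,…,r_{j-1})`, `θ 1 > ⋯ > θ (h+1) = 1`.  Then the
number of elements of `Γ` below the conductor
`c = −r₀ + 1 + Σ_{j=1}^h r_j (θ_j/θ_{j+1} − 1)` equals `c/2`. -/
theorem strictly_generated_semigroup_count_below_conductor (h : ℕ)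
    (r θ : ℕ → ℕ) (c : ℕ)
    (hpos : ∀ j, j ≤ h → 0 < r j)
    (hθ : ∀ j, 1 ≤ j → j ≤ h + 1 → θ j = (Finset.range j).gcd r)
    (hdec : ∀ j, 1 ≤ j → j ≤ h → θ (j + 1) < θ j)
    (hone : θ (h + 1) = 1)
    (hstrict : ∀ j, 1 ≤ j → j + 1 ≤ h → (θ j / θ (j + 1)) * r j < r (j + 1))
    (hcval : (c : ℤ) = -(r 0 : ℤ) + 1 +
        ∑ j ∈ Finset.Icc 1 h, (r j : ℤ) * ((θ j / θ (j + 1) : ℕ) - 1 : ℤ)) :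
    2 * {z : ℕ | z < c ∧
        ∃ a : ℕ → ℕ, z = ∑ j ∈ Finset.range (h + 1), a j * r j}.ncard = c := by
  classical
  have hpos0 : 0 < r 0 := hpos 0 (Nat.zero_le h)
  have hθ1 : θ 1 = r 0 := by rw [hθ 1 le_rfl (by omega)]; simp
  have hex : ∀ z : ℤ, ∃ a, SGDigits r θ h z a := fun z =>
    sg_digits_exist h r θ hpos0 hθ h le_rfl z (by simp [hone])
  choose A hA using hex
  set m : ℤ → ℕ := fun z => ∑ j ∈ Finset.Icc 1 h, A z j * r j with hm
  have hmcast : ∀ z : ℤ, ((m z : ℕ) : ℤ) = ∑ i ∈ Finset.Icc 1 h, (A z i : ℤ) * r i := by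
    intro z
    simp only [hm]
    push_cast
    try rfl
  have K1 : ∀ z : ℤ, (r 0 : ℤ) ∣ z - (m z : ℤ) := by
    intro z
    have hd := (hA z).2 1 le_rfl (by omega)
    rw [hθ1] at hd
    rw [hmcast]
    exact hd
  have K2f : ∀ z : ℕ, (∃ a : ℕ → ℕ, z = ∑ j ∈ Finset.range (h + 1), a j * r j) →
      m (z : ℤ) ≤ z := by
    rintro z ⟨b, hb⟩
    simp only [hm]
    exact sg_digits_min h r θ hpos hθ hdec hstrict h le_rfl b (A z) z hb (hA z)
  have K2b : ∀ z : ℕ, m (z : ℤ) ≤ z →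
      ∃ a : ℕ → ℕ, z = ∑ j ∈ Finset.range (h + 1), a j * r j := by
    intro z hle
    obtain ⟨k, hk⟩ := K1 (z : ℤ)
    have hk0 : 0 ≤ k := by
      by_contra hneg
      push_neg at hneg
      have : (r 0 : ℤ) * k ≤ (r 0 : ℤ) * (-1) :=
        mul_le_mul_of_nonneg_left (by omega) (by positivity)
      rw [mul_neg_one] at this
      omega
    refine ⟨fun j => if j = 0 then k.toNat else A (z : ℤ) j, ?_⟩
    rw [sg_range_split]
    have hcongr : ∑ j ∈ Finset.Icc 1 h, (if j = 0 then k.toNat else A (z : ℤ) j) * r j =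
        ∑ j ∈ Finset.Icc 1 h, A (z : ℤ) j * r j := by
      apply Finset.sum_congr rfl
      intro i hi
      have : i ≠ 0 := by have := (Finset.mem_Icc.1 hi).1; omega
      simp [this]
    rw [hcongr]
    beta_reduce
    rw [if_pos rfl]
    have hzeq : (z : ℤ) = (r 0 : ℤ) * (k.toNat : ℤ) + ((m (z : ℤ) : ℕ) : ℤ) := by
      rw [Int.toNat_of_nonneg hk0]
      omega
    have hfin : z = r 0 * k.toNat + m (z : ℤ) := by exact_mod_cast hzeq
    rw [mul_comm] at hfin
    rw [hm] at hfin
    exact hfin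
  -- the "sum of all digits" constant
  set S : ℕ := ∑ j ∈ Finset.Icc 1 h, (θ j / θ (j + 1) - 1) * r j with hSdef
  have hS : (S : ℤ) = (c : ℤ) - 1 + r 0 := by
    have h1 : (S : ℤ) = ∑ j ∈ Finset.Icc 1 h, ((θ j / θ (j + 1) : ℕ) - 1 : ℤ) * r j := by
      rw [hSdef]
      push_cast
      apply Finset.sum_congr rfl
      intro i hi
      have hi' := Finset.mem_Icc.1 hi
      have := sg_e_two h r θ hpos0 hθ hdec i (by omega) (by omega)
      rw [Nat.cast_sub (by omega)]
      push_cast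
      ring
    have h2 : ∑ j ∈ Finset.Icc 1 h, ((θ j / θ (j + 1) : ℕ) - 1 : ℤ) * r j =
        ∑ j ∈ Finset.Icc 1 h, (r j : ℤ) * ((θ j / θ (j + 1) : ℕ) - 1 : ℤ) := by
      apply Finset.sum_congr rfl
      intro i _
      ring
    rw [h1, h2]
    omega
  have hmS : ∀ z : ℤ, m z ≤ S := by
    intro z
    simp only [hm, hSdef]
    apply Finset.sum_le_sum
    intro i hi
    have hi' := Finset.mem_Icc.1 hi
    have := (hA z).1 i (by omega) (by omega)
    exact Nat.mul_le_mul_right _ (by omega)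
  -- the symmetry of the digit expansion
  have hsym : ∀ z : ℕ, z < c → (m ((c - 1 - z : ℕ) : ℤ) : ℤ) = (S : ℤ) - m (z : ℤ) := by
    intro z hz
    have d1 := sg_digits_compl h r θ hpos0 hθ hdec h le_rfl (z : ℤ) (A (z : ℤ)) (hA (z : ℤ))
    have d2 := sg_digits_shift h r θ hθ h le_rfl _ _ (-1) d1
    have hval : ((c - 1 - z : ℕ) : ℤ) =
        ((∑ j ∈ Finset.Icc 1 h, (θ j / θ (j + 1) - 1) * r j : ℕ) : ℤ) - (z : ℤ) +
          (-1) * r 0 := by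
      rw [← hSdef]
      omega
    rw [← hval] at d2
    have huniq := sg_digits_unique h r θ hpos0 hθ h le_rfl _ _ _
      (hA ((c - 1 - z : ℕ) : ℤ)) d2
    have hmeq : m ((c - 1 - z : ℕ) : ℤ) =
        ∑ j ∈ Finset.Icc 1 h, (θ j / θ (j + 1) - 1 - A (z : ℤ) j) * r j := by
      simp only [hm]
      apply Finset.sum_congr rfl
      intro i hi
      have hi' := Finset.mem_Icc.1 hi
      rw [huniq i (by omega) (by omega)]
    have hcast : ((∑ j ∈ Finset.Icc 1 h, (θ j / θ (j + 1) - 1 - A (z : ℤ) j) * r j : ℕ) : ℤ)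
        = (S : ℤ) - ((m (z : ℤ) : ℕ) : ℤ) := by
      rw [hSdef, hmcast]
      push_cast
      rw [← Finset.sum_sub_distrib]
      apply Finset.sum_congr rfl
      intro i hi
      have hi' := Finset.mem_Icc.1 hi
      have hb := (hA (z : ℤ)).1 i (by omega) (by omega)
      have he2 := sg_e_two h r θ hpos0 hθ hdec i (by omega) (by omega)
      rw [Nat.cast_sub (by omega)]
      push_cast [Nat.cast_sub (by omega : 1 ≤ θ i / θ (i + 1))]
      ring
    rw [hmeq, hcast]
  -- membership below c is symmetric
  have hiff : ∀ z : ℕ, z < c →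
      (m (z : ℤ) ≤ z ↔ ¬ m ((c - 1 - z : ℕ) : ℤ) ≤ c - 1 - z) := by
    intro z hz
    have hs := hsym z hz
    constructor
    · intro hle hcon
      have h1 : ((m ((c - 1 - z : ℕ) : ℤ) : ℕ) : ℤ) ≤ ((c - 1 - z : ℕ) : ℤ) := by
        exact_mod_cast hcon
      omega
    · intro hcon
      by_contra hlt
      push_neg at hlt
      obtain ⟨k, hk⟩ := K1 (z : ℤ)
      have hk0 : k ≤ -1 := by
        by_contra hge
        push_neg at hge
        have : (0 : ℤ) ≤ (r 0 : ℤ) * k := mul_nonneg (by positivity) (by omega)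
        omega
      have hle : (r 0 : ℤ) * k ≤ (r 0 : ℤ) * (-1) :=
        mul_le_mul_of_nonneg_left (by omega) (by positivity)
      rw [mul_neg_one] at hle
      have hcon' : ¬ ((m ((c - 1 - z : ℕ) : ℤ) : ℕ) : ℤ) ≤ ((c - 1 - z : ℕ) : ℤ) := by
        intro hx
        exact hcon (by exact_mod_cast hx)
      omega
  -- rewrite the set as a finset
  have hseteq : {z : ℕ | z < c ∧
      ∃ a : ℕ → ℕ, z = ∑ j ∈ Finset.range (h + 1), a j * r j} =
      ↑((Finset.range c).filter fun z : ℕ => m (z : ℤ) ≤ z) := by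
    ext z
    simp only [Set.mem_setOf_eq, Finset.coe_filter, Finset.mem_range, Set.mem_setOf_eq]
    constructor
    · rintro ⟨h1, h2⟩
      exact ⟨h1, K2f z h2⟩
    · rintro ⟨h1, h2⟩
      exact ⟨h1, K2b z h2⟩
  rw [hseteq, Set.ncard_coe_finset]
  -- bijection with the complement
  have hbij : ((Finset.range c).filter fun z : ℕ => m (z : ℤ) ≤ z).card =
      ((Finset.range c).filter fun z : ℕ => ¬ m (z : ℤ) ≤ z).card := by
    apply Finset.card_bij (fun z _ => c - 1 - z)
    · intro a ha
      rw [Finset.mem_filter, Finset.mem_range] at ha ⊢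
      refine ⟨by omega, ?_⟩
      exact (hiff a ha.1).1 ha.2
    · intro a ha b hb hab
      rw [Finset.mem_filter, Finset.mem_range] at ha hb
      omega
    · intro b hb
      rw [Finset.mem_filter, Finset.mem_range] at hb
      refine ⟨c - 1 - b, ?_, by omega⟩
      rw [Finset.mem_filter, Finset.mem_range]
      refine ⟨by omega, ?_⟩
      have := (hiff (c - 1 - b) (by omega)).2
      rw [show c - 1 - (c - 1 - b) = b by omega] at this
      exact this hb.2
  have hcard := Finset.card_filter_add_card_filter_not
    (s := Finset.range c) (p := fun z : ℕ => m (z : ℤ) ≤ z)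
  rw [Finset.card_range] at hcard
  omega
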